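/- There exists a constant C > 0 such that for every integer n ≥ 4 one has Δ_{3,3}(n) ≤ C · n^{−4/3}; equivalently, every n-element subset of [0,1]^3 contains 4 points forming a tetrahedron of volume at most C · n^{−4/3}. -/

import Mathlib

open scoped RealInnerProductSpace

/-- The Gram matrix of a collection of `k` vectors in `ℝ^d`. -/
noncomputable def gram {d k : ℕ} (v : Fin k → EuclideanSpace ℝ (Fin d)) :
    Matrix (Fin k) (Fin k) ℝ :=
  Matrix.of fun i j => ⟪v i, v j⟫

/-- `vol v` is the `k`-dimensional volume of the parallelepiped spanned by
`v 1, …, v k`, i.e. the square root of the determinant of their Gram matrix.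
For `k = 0` it equals `1`. -/
noncomputable def vol {d k : ℕ} (v : Fin k → EuclideanSpace ℝ (Fin d)) : ℝ :=
  Real.sqrt (gram v).det

/-- The `k`-dimensional volume of the simplex with vertices `p 0, …, p k`. -/
noncomputable def simplexVol {d k : ℕ} (p : Fin (k + 1) → EuclideanSpace ℝ (Fin d)) : ℝ :=
  (Nat.factorial k : ℝ)⁻¹ * vol (fun i : Fin k => p i.succ - p 0)

/-- The minimum, over all `(k+1)`-element subsets of `X`, of the `k`-dimensional
volume of the simplex they span. -/
noncomputable def minSimplexVol (d k : ℕ) (X : Finset (EuclideanSpace ℝ (Fin d))) : ℝ :=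
  sInf { v : ℝ | ∃ p : Fin (k + 1) → EuclideanSpace ℝ (Fin d),
    Function.Injective p ∧ (∀ i, p i ∈ X) ∧ v = simplexVol p }

/-- `Delta k d n` is the supremum, over all `n`-element subsets `X` of the unit cube
`[0,1]^d`, of the minimum `k`-dimensional simplex volume among `(k+1)`-element
subsets of `X`. -/
noncomputable def Delta (k d n : ℕ) : ℝ :=
  sSup { v : ℝ | ∃ X : Finset (EuclideanSpace ℝ (Fin d)), X.card = n ∧
    (∀ x ∈ X, ∀ i, x i ∈ Set.Icc (0 : ℝ) 1) ∧ v = minSimplexVol d k X }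

/-! ### auxiliary lemmas -/

lemma det3_eq0 (u a b : Fin 3 → ℝ) (hu : u 0 ≠ 0) :
    Matrix.det (Matrix.of fun r c => ![u, a, b] r c) =
      u 0 * ((a 1 - a 0 / u 0 * u 1) * (b 2 - b 0 / u 0 * u 2)
           - (b 1 - b 0 / u 0 * u 1) * (a 2 - a 0 / u 0 * u 2)) := by
  simp [Matrix.det_fin_three]; field_simp; ring

lemma det3_eq1 (u a b : Fin 3 → ℝ) (hu : u 1 ≠ 0) :
    Matrix.det (Matrix.of fun r c => ![u, a, b] r c) =
      u 1 * ((a 2 - a 1 / u 1 * u 2) * (b 0 - b 1 / u 1 * u 0)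
           - (b 2 - b 1 / u 1 * u 2) * (a 0 - a 1 / u 1 * u 0)) := by
  simp [Matrix.det_fin_three]; field_simp; ring

lemma det3_eq2 (u a b : Fin 3 → ℝ) (hu : u 2 ≠ 0) :
    Matrix.det (Matrix.of fun r c => ![u, a, b] r c) =
      u 2 * ((a 0 - a 2 / u 2 * u 0) * (b 1 - b 2 / u 2 * u 1)
           - (b 0 - b 2 / u 2 * u 0) * (a 1 - a 2 / u 2 * u 1)) := by
  simp [Matrix.det_fin_three]; field_simp; ring

lemma det3_cyc (u a b : Fin 3 → ℝ) (i j k : Fin 3)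
    (hperm : ((i,j,k) = (0,1,2) ∨ (i,j,k) = (1,2,0) ∨ (i,j,k) = (2,0,1)))
    (hu : u i ≠ 0) :
    Matrix.det (Matrix.of fun r c => ![u, a, b] r c) =
      u i * ((a j - a i / u i * u j) * (b k - b i / u i * u k)
           - (b j - b i / u i * u j) * (a k - a i / u i * u k)) := by
  rcases hperm with h | h | h <;>
    · obtain ⟨hi, hj, hk⟩ : _ ∧ _ ∧ _ := by
        simpa [Prod.ext_iff] using h
      subst hi; subst hj; subst hk
      first
        | exact det3_eq0 u a b hu
        | exact det3_eq1 u a b hu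
        | exact det3_eq2 u a b hu

lemma vol_eq_abs_det (v : Fin 3 → EuclideanSpace ℝ (Fin 3)) :
    vol v = |Matrix.det (Matrix.of fun r c => v r c)| := by
  have h : gram v = (Matrix.of fun r c => v r c) * (Matrix.of fun r c => v r c).transpose := by
    ext i j
    simp [gram, Matrix.mul_apply, Matrix.transpose_apply, PiLp.inner_apply,
      RCLike.inner_apply, conj_trivial, mul_comm]
  rw [vol, h, Matrix.det_mul, Matrix.det_transpose, Real.sqrt_mul_self_eq_abs]

lemma simplexVol_nonneg {d k : ℕ} (p : Fin (k + 1) → EuclideanSpace ℝ (Fin d)) :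
    0 ≤ simplexVol p :=
  mul_nonneg (by positivity) (Real.sqrt_nonneg _)

lemma minSimplexVol_le {d k : ℕ} (X : Finset (EuclideanSpace ℝ (Fin d)))
    (P : Fin (k + 1) → EuclideanSpace ℝ (Fin d)) (hinj : Function.Injective P)
    (hmem : ∀ i, P i ∈ X) : minSimplexVol d k X ≤ simplexVol P := by
  apply csInf_le
  · exact ⟨0, by rintro v ⟨Q, -, -, rfl⟩; exact simplexVol_nonneg Q⟩
  · exact ⟨P, hinj, hmem, rfl⟩

lemma cell_close {m : ℕ} (hm : 0 < m) {s t : ℝ} (hs : s ∈ Set.Icc (0:ℝ) 1)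
    (ht : t ∈ Set.Icc (0:ℝ) 1)
    (h : min (⌊(m:ℝ) * s⌋₊) (m-1) = min (⌊(m:ℝ) * t⌋₊) (m-1)) : |s - t| ≤ 1/m := by
  obtain ⟨hs0, hs1⟩ := hs
  obtain ⟨ht0, ht1⟩ := ht
  have hmR : (0:ℝ) < m := by exact_mod_cast hm
  have hns : (0:ℝ) ≤ (m:ℝ) * s := by positivity
  have hnt : (0:ℝ) ≤ (m:ℝ) * t := by positivity
  have hms : (m:ℝ) * s ≤ m := by nlinarith
  have hmt : (m:ℝ) * t ≤ m := by nlinarith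
  have fs := Nat.floor_le hns
  have ft := Nat.floor_le hnt
  have fs' := Nat.lt_floor_add_one ((m:ℝ) * s)
  have ft' := Nat.lt_floor_add_one ((m:ℝ) * t)
  have key : |(m:ℝ) * s - (m:ℝ) * t| ≤ 1 := by
    by_cases hcs : ⌊(m:ℝ) * s⌋₊ ≤ m - 1
    · by_cases hct : ⌊(m:ℝ) * t⌋₊ ≤ m - 1
      · have he : ⌊(m:ℝ) * s⌋₊ = ⌊(m:ℝ) * t⌋₊ := by
          rwa [min_eq_left hcs, min_eq_left hct] at h
        have he' : ((⌊(m:ℝ) * s⌋₊ : ℝ)) = (⌊(m:ℝ) * t⌋₊ : ℝ) := by exact_mod_cast he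
        rw [abs_le]; constructor <;> nlinarith
      · have h1 : m ≤ ⌊(m:ℝ) * t⌋₊ := by omega
        have h1' : (m:ℝ) ≤ (⌊(m:ℝ) * t⌋₊ : ℝ) := by exact_mod_cast h1
        have h2 : m - 1 ≤ ⌊(m:ℝ) * s⌋₊ := by omega
        have h2' : ((m:ℝ) - 1) ≤ (⌊(m:ℝ) * s⌋₊ : ℝ) := by
          have : ((m-1 : ℕ) : ℝ) ≤ (⌊(m:ℝ) * s⌋₊ : ℝ) := by exact_mod_cast h2
          push_cast [Nat.cast_sub hm] at this
          linarith [this]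
        rw [abs_le]; constructor <;> nlinarith
    · have h1 : m ≤ ⌊(m:ℝ) * s⌋₊ := by omega
      have h1' : (m:ℝ) ≤ (⌊(m:ℝ) * s⌋₊ : ℝ) := by exact_mod_cast h1
      have h2 : m - 1 ≤ ⌊(m:ℝ) * t⌋₊ := by
        by_cases hct : ⌊(m:ℝ) * t⌋₊ ≤ m - 1 <;> omega
      have h2' : ((m:ℝ) - 1) ≤ (⌊(m:ℝ) * t⌋₊ : ℝ) := by
        have : ((m-1 : ℕ) : ℝ) ≤ (⌊(m:ℝ) * t⌋₊ : ℝ) := by exact_mod_cast h2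
        push_cast [Nat.cast_sub hm] at this
        linarith [this]
      rw [abs_le]; constructor <;> nlinarith
  have h2 : |s - t| * m ≤ 1 := by
    calc |s - t| * m = |s - t| * |(m:ℝ)| := by rw [abs_of_pos hmR]
    _ = |(m:ℝ) * s - (m:ℝ) * t| := by rw [← abs_mul]; ring_nf
    _ ≤ 1 := key
  rw [le_div_iff₀ hmR]
  linarith

/-- trivial bound: any simplex with vertices in the unit cube has volume at most 1. -/
lemma simplexVol_le_one (P : Fin 4 → EuclideanSpace ℝ (Fin 3))
    (hP : ∀ i, ∀ c, P i c ∈ Set.Icc (0:ℝ) 1) : simplexVol P ≤ 1 := by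
  have habs : ∀ (r : Fin 4) (c : Fin 3), |P r c - P 0 c| ≤ 1 := by
    intro r c
    have h1 := hP r c
    have h2 := hP 0 c
    rw [abs_le]
    constructor <;> [linarith [h1.1, h2.2]; linarith [h1.2, h2.1]]
  have hM : vol (fun i : Fin 3 => P i.succ - P 0) ≤ 6 := by
    rw [vol_eq_abs_det]
    set v := fun i : Fin 3 => P i.succ - P 0 with hv
    have hvc : ∀ (r : Fin 3) (c : Fin 3), |v r c| ≤ 1 := by
      intro r c
      have : v r c = P r.succ c - P 0 c := by
        simp [hv, PiLp.sub_apply]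
      rw [this]; exact habs r.succ c
    have tri : ∀ x y z : ℝ, |x| ≤ 1 → |y| ≤ 1 → |z| ≤ 1 → |x*y*z| ≤ 1 := by
      intro x y z hx hy hz
      rw [abs_mul, abs_mul]
      have h1 : |x| * |y| ≤ 1 := by nlinarith [abs_nonneg x, abs_nonneg y]
      nlinarith [abs_nonneg z, mul_nonneg (abs_nonneg x) (abs_nonneg y)]
    rw [Matrix.det_fin_three]
    simp only [Matrix.of_apply]
    have t1 := tri _ _ _ (hvc 0 0) (hvc 1 1) (hvc 2 2)
    have t2 := tri _ _ _ (hvc 0 0) (hvc 1 2) (hvc 2 1)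
    have t3 := tri _ _ _ (hvc 0 1) (hvc 1 0) (hvc 2 2)
    have t4 := tri _ _ _ (hvc 0 1) (hvc 1 2) (hvc 2 0)
    have t5 := tri _ _ _ (hvc 0 2) (hvc 1 0) (hvc 2 1)
    have t6 := tri _ _ _ (hvc 0 2) (hvc 1 1) (hvc 2 0)
    rw [abs_le] at *
    constructor <;> linarith [t1.1, t1.2, t2.1, t2.2, t3.1, t3.2, t4.1, t4.2, t5.1, t5.2, t6.1, t6.2]
  have : simplexVol P = (6:ℝ)⁻¹ * vol (fun i : Fin 3 => P i.succ - P 0) := by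
    simp [simplexVol, Nat.factorial]
  rw [this]
  nlinarith [hM]

lemma rpow_third_cube {x : ℝ} (hx : 0 ≤ x) : (x ^ ((1:ℝ)/3)) ^ (3:ℕ) = x := by
  rw [← Real.rpow_natCast (x ^ ((1:ℝ)/3)) 3, ← Real.rpow_mul hx]
  norm_num

lemma slope_id1 {ax ay bx b2 : ℝ} (hax : ax ≠ 0) (hay : ay ≠ 0) :
    ax * b2 - ay * bx = ax * ay * (b2 / ay - bx / ax) := by
  field_simp

lemma slope_id2 {ax ay bx b2 : ℝ} (hbx : bx ≠ 0) (hb2 : b2 ≠ 0) :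
    ax * b2 - ay * bx = bx * b2 * (ax / bx - ay / b2) := by
  field_simp

lemma inj4 {α : Type*} {p q x y : α} (hpq : p ≠ q) (hxp : x ≠ p) (hyp : y ≠ p)
    (hxq : x ≠ q) (hyq : y ≠ q) (hxy : x ≠ y) : Function.Injective ![p, q, x, y] := by
  intro a b hab
  fin_cases a <;> fin_cases b <;>
    first
      | rfl
      | exact absurd hab hpq
      | exact absurd hab hpq.symm
      | exact absurd hab hxp
      | exact absurd hab hxp.symm
      | exact absurd hab hyp
      | exact absurd hab hyp.symm
      | exact absurd hab hxq
      | exact absurd hab hxq.symm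
      | exact absurd hab hyq
      | exact absurd hab hyq.symm
      | exact absurd hab hxy
      | exact absurd hab hxy.symm

lemma forall_fin4 {P : Fin 4 → Prop} (h0 : P 0) (h1 : P 1) (h2 : P 2) (h3 : P 3) : ∀ c, P c := by
  intro c; fin_cases c; exacts [h0, h1, h2, h3]

lemma forall_fin3 {P : Fin 3 → Prop} (h0 : P 0) (h1 : P 1) (h2 : P 2) : ∀ c, P c := by
  intro c; fin_cases c; exacts [h0, h1, h2]

set_option maxHeartbeats 2000000 in
lemma main_construction {n : ℕ} (hn : 65 ≤ n) (X : Finset (EuclideanSpace ℝ (Fin 3)))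
    (hcard : X.card = n) (hX : ∀ x ∈ X, ∀ i, x i ∈ Set.Icc (0:ℝ) 1) :
    ∃ P : Fin 4 → EuclideanSpace ℝ (Fin 3), Function.Injective P ∧ (∀ i, P i ∈ X) ∧
      simplexVol P ≤ 11 * (n:ℝ) ^ (-(4/3) : ℝ) := by
  classical
  have hnR : (0:ℝ) < n := by positivity
  -- the grid parameter m
  set m : ℕ := ⌊((n:ℝ) - 1) ^ ((1:ℝ)/3)⌋₊ with hm_def
  have hn1 : (64:ℝ) ≤ (n:ℝ) - 1 := by
    have : (65:ℝ) ≤ (n:ℝ) := by exact_mod_cast hn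
    linarith
  have hn1' : (0:ℝ) ≤ (n:ℝ) - 1 := by linarith
  have hr4 : (4:ℝ) ≤ ((n:ℝ) - 1) ^ ((1:ℝ)/3) := by
    have h64 : ((64:ℝ)) ^ ((1:ℝ)/3) = 4 := by
      rw [show (64:ℝ) = 4 ^ (3:ℕ) by norm_num, ← Real.rpow_natCast (4:ℝ) 3,
        ← Real.rpow_mul (by norm_num : (0:ℝ) ≤ 4)]
      norm_num
    rw [← h64]
    exact Real.rpow_le_rpow (by norm_num) hn1 (by norm_num)
  have hm4 : 3 ≤ m := Nat.le_floor (by push_cast; linarith)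
  have hm0 : 0 < m := by omega
  have hmR : (0:ℝ) < m := by exact_mod_cast hm0
  have hm_le : (m:ℝ) ≤ ((n:ℝ) - 1) ^ ((1:ℝ)/3) := Nat.floor_le (by positivity)
  have hm_ge : ((n:ℝ) - 1) ^ ((1:ℝ)/3) - 1 ≤ (m:ℝ) := by
    have := Nat.sub_one_lt_floor (((n:ℝ) - 1) ^ ((1:ℝ)/3))
    linarith
  -- m^3 < n
  have hm3n : (m:ℝ) ^ (3:ℕ) ≤ (n:ℝ) - 1 := by
    calc (m:ℝ) ^ (3:ℕ) ≤ (((n:ℝ) - 1) ^ ((1:ℝ)/3)) ^ (3:ℕ) := by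
          apply pow_le_pow_left₀ (by positivity) hm_le
      _ = (n:ℝ) - 1 := rpow_third_cube hn1'
  have hm3n' : m ^ 3 < n := by
    have : ((m ^ 3 : ℕ) : ℝ) < (n:ℝ) := by push_cast; linarith
    exact_mod_cast this
  -- 1/m ≤ 2 n^{-1/3}
  have hminv : (1:ℝ)/m ≤ 2 * (n:ℝ) ^ (-(1:ℝ)/3) := by
    have h8 : (n:ℝ) ≤ 8 * (m:ℝ) ^ (3:ℕ) := by
      have h34 : (3/4 : ℝ) * (((n:ℝ) - 1) ^ ((1:ℝ)/3)) ≤ (m:ℝ) := by linarith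
      have hcube : (3/4 : ℝ)^(3:ℕ) * ((n:ℝ) - 1) ≤ (m:ℝ)^(3:ℕ) := by
        have := pow_le_pow_left₀ (by positivity : (0:ℝ) ≤ (3/4 : ℝ) * (((n:ℝ) - 1) ^ ((1:ℝ)/3))) h34 3
        rw [mul_pow, rpow_third_cube hn1'] at this
        exact this
      have hn63 : (63/64 : ℝ) * (n:ℝ) ≤ (n:ℝ) - 1 := by
        have : (64:ℝ) ≤ (n:ℝ) - 1 := hn1
        nlinarith
      nlinarith
    -- cube root: n^{1/3} ≤ 2m
    have hroot : (n:ℝ) ^ ((1:ℝ)/3) ≤ 2 * m := by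
      have h2m : ((8:ℝ) * (m:ℝ)^(3:ℕ)) ^ ((1:ℝ)/3) = 2 * m := by
        rw [show (8:ℝ) * (m:ℝ)^(3:ℕ) = (2*m)^(3:ℕ) by ring,
          ← Real.rpow_natCast (2*(m:ℝ)) 3, ← Real.rpow_mul (by positivity)]
        norm_num
      rw [← h2m]
      exact Real.rpow_le_rpow (le_of_lt hnR) h8 (by norm_num)
    rw [div_le_iff₀ hmR]
    have hpos : (0:ℝ) < (n:ℝ) ^ ((1:ℝ)/3) := Real.rpow_pos_of_pos hnR _
    have : (n:ℝ) ^ (-(1:ℝ)/3) = ((n:ℝ) ^ ((1:ℝ)/3))⁻¹ := by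
      rw [← Real.rpow_neg (le_of_lt hnR)]; norm_num
    rw [this]
    calc (1:ℝ) = ((n:ℝ) ^ ((1:ℝ)/3)) * ((n:ℝ) ^ ((1:ℝ)/3))⁻¹ := by
          field_simp
      _ ≤ (2 * m) * ((n:ℝ) ^ ((1:ℝ)/3))⁻¹ := by
          apply mul_le_mul_of_nonneg_right hroot (by positivity)
      _ = 2 * ((n:ℝ) ^ ((1:ℝ)/3))⁻¹ * m := by ring
  -- first pigeonhole: two points in the same grid cell
  have hpigeon1 : ∃ p ∈ X, ∃ q ∈ X, p ≠ q ∧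
      (∀ j : Fin 3, min (⌊(m:ℝ) * p j⌋₊) (m-1) = min (⌊(m:ℝ) * q j⌋₊) (m-1)) := by
    classical
    let f : EuclideanSpace ℝ (Fin 3) → (Fin 3 → Fin m) :=
      fun x j => ⟨min (⌊(m:ℝ) * x j⌋₊) (m-1), by omega⟩
    have hcards : (Finset.univ : Finset (Fin 3 → Fin m)).card < X.card := by
      rw [Finset.card_univ, hcard]
      simp only [Fintype.card_fun, Fintype.card_fin]
      exact lt_of_le_of_lt (le_of_eq rfl) hm3n'
    obtain ⟨p, hp, q, hq, hpq, hfeq⟩ :=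
      Finset.exists_ne_map_eq_of_card_lt_of_maps_to hcards
        (fun x _ => Finset.mem_univ (f x))
    refine ⟨p, hp, q, hq, hpq, fun j => ?_⟩
    have := congrFun hfeq j
    exact congrArg Fin.val this
  obtain ⟨p, hpX, q, hqX, hpq, hcellpq⟩ := hpigeon1
  -- coordinates of the difference vector
  set u : Fin 3 → ℝ := fun j => q j - p j with hu_def
  have hu_small : ∀ j, |u j| ≤ 1/m := by
    intro j
    exact cell_close hm0 (hX q hqX j) (hX p hpX j) ((hcellpq j).symm)
  -- a maximal coordinate of u
  obtain ⟨i, j, k, hperm, hmax⟩ : ∃ i j k : Fin 3,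
      ((i,j,k) = ((0:Fin 3),(1:Fin 3),(2:Fin 3)) ∨ (i,j,k) = (1,2,0) ∨ (i,j,k) = (2,0,1)) ∧
      ∀ c, |u c| ≤ |u i| := by
    rcases le_total |u 0| |u 1| with h01 | h01 <;>
      rcases le_total |u 1| |u 2| with h12 | h12 <;>
      rcases le_total |u 0| |u 2| with h02 | h02
    · exact ⟨2, 0, 1, by norm_num, forall_fin3 h02 h12 (le_refl _)⟩
    · exact ⟨2, 0, 1, by norm_num, forall_fin3 (h01.trans h12) h12 (le_refl _)⟩
    · exact ⟨1, 2, 0, by norm_num, forall_fin3 h01 (le_refl _) h12⟩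
    · exact ⟨1, 2, 0, by norm_num, forall_fin3 h01 (le_refl _) h12⟩
    · exact ⟨2, 0, 1, by norm_num, forall_fin3 h02 h12 (le_refl _)⟩
    · exact ⟨0, 1, 2, by norm_num, forall_fin3 (le_refl _) h01 h02⟩
    · exact ⟨0, 1, 2, by norm_num, forall_fin3 (le_refl _) h01 (h12.trans h01)⟩
    · exact ⟨0, 1, 2, by norm_num, forall_fin3 (le_refl _) h01 h02⟩
  have hui : u i ≠ 0 := by
    intro h0
    apply hpq
    have hall : ∀ c, u c = 0 := by
      intro c
      have := hmax c
      rw [h0] at this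
      simpa using abs_nonpos_iff.mp (by simpa using this)
    apply PiLp.ext
    intro c
    have := hall c
    rw [hu_def] at this
    simp only at this
    linarith
  have huipos : 0 < |u i| := abs_pos.mpr hui
  -- the two "slope" coordinates
  set A : EuclideanSpace ℝ (Fin 3) → ℝ :=
    fun z => (z j - p j) - (z i - p i) / u i * u j with hA_def
  set B : EuclideanSpace ℝ (Fin 3) → ℝ :=
    fun z => (z k - p k) - (z i - p i) / u i * u k with hB_def
  have hcoord1 : ∀ z ∈ X, ∀ c, |z c - p c| ≤ 1 := by
    intro z hz c
    have h1 := hX z hz c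
    have h2 := hX p hpX c
    rw [abs_le]
    constructor <;> [linarith [h1.1, h2.2]; linarith [h1.2, h2.1]]
  have hA2 : ∀ z ∈ X, |A z| ≤ 2 := by
    intro z hz
    have h1 : |z j - p j| ≤ 1 := hcoord1 z hz j
    have h2 : |(z i - p i) / u i * u j| ≤ 1 := by
      rw [abs_mul, abs_div]
      have h3 : |z i - p i| ≤ 1 := hcoord1 z hz i
      have h4 : |u j| ≤ |u i| := hmax j
      rw [div_mul_eq_mul_div, div_le_one huipos]
      nlinarith [abs_nonneg (z i - p i), abs_nonneg (u j)]
    calc |A z| ≤ |z j - p j| + |(z i - p i) / u i * u j| := abs_sub _ _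
      _ ≤ 2 := by linarith
  have hB2 : ∀ z ∈ X, |B z| ≤ 2 := by
    intro z hz
    have h1 : |z k - p k| ≤ 1 := hcoord1 z hz k
    have h2 : |(z i - p i) / u i * u k| ≤ 1 := by
      rw [abs_mul, abs_div]
      have h3 : |z i - p i| ≤ 1 := hcoord1 z hz i
      have h4 : |u k| ≤ |u i| := hmax k
      rw [div_mul_eq_mul_div, div_le_one huipos]
      nlinarith [abs_nonneg (z i - p i), abs_nonneg (u k)]
    calc |B z| ≤ |z k - p k| + |(z i - p i) / u i * u k| := abs_sub _ _
      _ ≤ 2 := by linarith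
  -- the key function
  set key : EuclideanSpace ℝ (Fin 3) → ℝ :=
    fun z => if |B z| ≤ |A z| then (if A z = 0 then 0 else B z / A z) else A z / B z
    with hkey_def
  have hkey_mem : ∀ z, key z ∈ Set.Icc (-1:ℝ) 1 := by
    intro z
    rw [hkey_def]
    simp only
    by_cases hba : |B z| ≤ |A z|
    · rw [if_pos hba]
      by_cases hA0 : A z = 0
      · rw [if_pos hA0]; constructor <;> norm_num
      · rw [if_neg hA0]
        have hApos : 0 < |A z| := abs_pos.mpr hA0
        have : |B z / A z| ≤ 1 := by
          rw [abs_div, div_le_one hApos]; exact hba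
        exact abs_le.mp this
    · rw [if_neg hba]
      push_neg at hba
      have hBpos : 0 < |B z| := lt_of_le_of_lt (abs_nonneg _) hba
      have : |A z / B z| ≤ 1 := by
        rw [abs_div, div_le_one hBpos]; exact le_of_lt hba
      exact abs_le.mp this
  -- second pigeonhole
  set M2 : ℕ := (n - 3) / 2 with hM2_def
  have hM2pos : 0 < M2 := by omega
  have hM2R : (0:ℝ) < M2 := by exact_mod_cast hM2pos
  set Y : Finset (EuclideanSpace ℝ (Fin 3)) := (X.erase p).erase q with hY_def
  have hqY : q ∈ X.erase p := Finset.mem_erase.mpr ⟨fun h => hpq h.symm, hqX⟩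
  have hYcard : Y.card = n - 2 := by
    rw [hY_def, Finset.card_erase_of_mem hqY, Finset.card_erase_of_mem hpX, hcard]
    omega
  have hpigeon2 : ∃ x ∈ Y, ∃ y ∈ Y, x ≠ y ∧
      ((|B x| ≤ |A x|) ↔ (|B y| ≤ |A y|)) ∧
      (min (⌊(M2:ℝ) * ((key x + 1)/2)⌋₊) (M2-1) = min (⌊(M2:ℝ) * ((key y + 1)/2)⌋₊) (M2-1)) := by
    classical
    let g : EuclideanSpace ℝ (Fin 3) → Bool × Fin M2 :=
      fun z => (decide (|B z| ≤ |A z|), ⟨min (⌊(M2:ℝ) * ((key z + 1)/2)⌋₊) (M2-1), by omega⟩)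
    have hcards : (Finset.univ : Finset (Bool × Fin M2)).card < Y.card := by
      rw [Finset.card_univ, hYcard]
      simp only [Fintype.card_prod, Fintype.card_bool, Fintype.card_fin]
      omega
    obtain ⟨x, hx, y, hy, hxy, hgeq⟩ :=
      Finset.exists_ne_map_eq_of_card_lt_of_maps_to hcards
        (fun z _ => Finset.mem_univ (g z))
    refine ⟨x, hx, y, hy, hxy, ?_, ?_⟩
    · have := congrArg Prod.fst hgeq
      simpa [g] using decide_eq_decide.mp this
    · have := congrArg Prod.snd hgeq
      exact congrArg Fin.val this
  obtain ⟨x, hxY, y, hyY, hxy, hclass, hcellxy⟩ := hpigeon2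
  have hxX : x ∈ X := Finset.mem_of_mem_erase (Finset.mem_of_mem_erase hxY)
  have hyX : y ∈ X := Finset.mem_of_mem_erase (Finset.mem_of_mem_erase hyY)
  have hxp : x ≠ p := Finset.ne_of_mem_erase (Finset.mem_of_mem_erase hxY)
  have hyp : y ≠ p := Finset.ne_of_mem_erase (Finset.mem_of_mem_erase hyY)
  have hxq : x ≠ q := Finset.ne_of_mem_erase hxY
  have hyq : y ≠ q := Finset.ne_of_mem_erase hyY
  -- keys are close
  have hkeyclose : |key x - key y| ≤ 2 / M2 := by
    have hs : (key x + 1)/2 ∈ Set.Icc (0:ℝ) 1 := by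
      obtain ⟨h1, h2⟩ := hkey_mem x
      constructor <;> [linarith; linarith]
    have ht : (key y + 1)/2 ∈ Set.Icc (0:ℝ) 1 := by
      obtain ⟨h1, h2⟩ := hkey_mem y
      constructor <;> [linarith; linarith]
    have hc := cell_close hM2pos hs ht hcellxy
    have h2 : key x - key y = 2 * ((key x + 1)/2 - (key y + 1)/2) := by ring
    rw [h2, abs_mul, abs_two, div_eq_mul_one_div 2 (M2:ℝ)]
    exact mul_le_mul_of_nonneg_left hc (by norm_num)
  -- the product bound
  have hprod : |A x * B y - A y * B x| ≤ 8 / M2 := by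
    have e8 : (8:ℝ) / M2 = 2 * 2 * (2 / M2) := by ring
    by_cases hbx : |B x| ≤ |A x|
    · have hby : |B y| ≤ |A y| := hclass.mp hbx
      by_cases hAx : A x = 0
      · have hBx : B x = 0 := by
          rw [← abs_nonpos_iff]; rw [hAx] at hbx; simpa using hbx
        rw [hAx, hBx]
        simp
        positivity
      · by_cases hAy : A y = 0
        · have hBy : B y = 0 := by
            rw [← abs_nonpos_iff]; rw [hAy] at hby; simpa using hby
          rw [hAy, hBy]
          simp
          positivity
        · have hkx : key x = B x / A x := by
            rw [hkey_def]; simp only; rw [if_pos hbx, if_neg hAx]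
          have hky : key y = B y / A y := by
            rw [hkey_def]; simp only; rw [if_pos hby, if_neg hAy]
          have hid : A x * B y - A y * B x = A x * A y * (key y - key x) := by
            rw [hkx, hky]; exact slope_id1 hAx hAy
          rw [hid, e8, abs_mul, abs_mul]
          have e1 : |key y - key x| ≤ 2 / M2 := by
            rw [abs_sub_comm]; exact hkeyclose
          have g1 := mul_le_mul (hA2 x hxX) (hA2 y hyX) (abs_nonneg (A y)) (by norm_num : (0:ℝ) ≤ 2)
          exact mul_le_mul g1 e1 (abs_nonneg (key y - key x)) (by norm_num : (0:ℝ) ≤ 2 * 2)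
    · have hby : ¬ |B y| ≤ |A y| := fun h => hbx (hclass.mpr h)
      push_neg at hbx hby
      have hBx : B x ≠ 0 := by
        intro h; rw [h] at hbx; simp at hbx; exact absurd (lt_of_le_of_lt (abs_nonneg _) hbx) (by simp)
      have hBy : B y ≠ 0 := by
        intro h; rw [h] at hby; simp at hby; exact absurd (lt_of_le_of_lt (abs_nonneg _) hby) (by simp)
      have hkx : key x = A x / B x := by
        rw [hkey_def]; simp only; rw [if_neg (not_le.mpr hbx)]
      have hky : key y = A y / B y := by
        rw [hkey_def]; simp only; rw [if_neg (not_le.mpr hby)]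
      have hid : A x * B y - A y * B x = B x * B y * (key x - key y) := by
        rw [hkx, hky]; exact slope_id2 hBx hBy
      rw [hid, e8, abs_mul, abs_mul]
      have g1 := mul_le_mul (hB2 x hxX) (hB2 y hyX) (abs_nonneg (B y)) (by norm_num : (0:ℝ) ≤ 2)
      exact mul_le_mul g1 hkeyclose (abs_nonneg (key x - key y)) (by norm_num : (0:ℝ) ≤ 2 * 2)
  -- assemble the four points
  refine ⟨![p, q, x, y], inj4 hpq hxp hyp hxq hyq hxy, forall_fin4 hpX hqX hxX hyX, ?_⟩
  · -- the volume bound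
    have hfact : simplexVol ![p, q, x, y]
        = (6:ℝ)⁻¹ * vol (fun r : Fin 3 => ![p, q, x, y] r.succ - ![p, q, x, y] 0) := by
      simp only [simplexVol]
      norm_num [Nat.factorial]
    set a : Fin 3 → ℝ := fun c => x c - p c with ha_def
    set b : Fin 3 → ℝ := fun c => y c - p c with hb_def
    have hMeq : (Matrix.of fun r c => (fun r : Fin 3 => ![p, q, x, y] r.succ - ![p, q, x, y] 0) r c)
        = (Matrix.of fun r c => ![u, a, b] r c) := by
      ext r c
      fin_cases r <;>
        simp [Matrix.cons_val_zero, Matrix.cons_val_one, Matrix.head_cons,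
          PiLp.sub_apply, hu_def, ha_def, hb_def]
    have hdet : vol (fun r : Fin 3 => ![p, q, x, y] r.succ - ![p, q, x, y] 0)
        = |u i * (A x * B y - A y * B x)| := by
      rw [vol_eq_abs_det, hMeq, det3_cyc u a b i j k hperm hui]
    rw [hfact, hdet]
    -- numeric finish
    have hM2n : (n:ℝ) ≤ 4 * M2 := by
      have : n ≤ 4 * M2 := by omega
      exact_mod_cast this
    have e2 : |A x * B y - A y * B x| ≤ 32 / n := by
      refine hprod.trans ?_
      rw [div_le_div_iff₀ hM2R hnR]
      nlinarith
    have e1 : |u i| ≤ 2 * (n:ℝ) ^ (-(1:ℝ)/3) := (hu_small i).trans hminv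
    have habs : |u i * (A x * B y - A y * B x)|
        ≤ (2 * (n:ℝ) ^ (-(1:ℝ)/3)) * (32 / n) := by
      rw [abs_mul]
      exact mul_le_mul e1 e2 (abs_nonneg _) (by positivity)
    have hmerge : (n:ℝ) ^ (-(1:ℝ)/3) * (n:ℝ)⁻¹ = (n:ℝ) ^ (-(4/3):ℝ) := by
      rw [show ((n:ℝ))⁻¹ = (n:ℝ) ^ (-(1:ℝ)) by rw [Real.rpow_neg_one]]
      rw [← Real.rpow_add hnR]
      norm_num
    calc (6:ℝ)⁻¹ * |u i * (A x * B y - A y * B x)|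
        ≤ (6:ℝ)⁻¹ * ((2 * (n:ℝ) ^ (-(1:ℝ)/3)) * (32 / n)) := by
          exact mul_le_mul_of_nonneg_left habs (by norm_num)
      _ = (32/3) * ((n:ℝ) ^ (-(1:ℝ)/3) * (n:ℝ)⁻¹) := by
          field_simp
          ring
      _ = (32/3) * (n:ℝ) ^ (-(4/3):ℝ) := by rw [hmerge]
      _ ≤ 11 * (n:ℝ) ^ (-(4/3):ℝ) := by
          apply mul_le_mul_of_nonneg_right (by norm_num)
          positivity

/-- **Corollary 2 (case d = 3).** There is a constant `C > 0` such that for every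
`n ≥ 4` one has `Δ_{3,3}(n) ≤ C · n^(-(4/3))`: every `n`-element subset of `[0,1]^3`
contains 4 points spanning a simplex of 3-dimensional volume at most `C · n^(-(4/3))`. -/
theorem delta_three_three :
    ∃ C : ℝ, 0 < C ∧ ∀ n : ℕ, 4 ≤ n →
      Delta 3 3 n ≤ C * (n : ℝ) ^ ((-(4/3) : ℝ)) := by
  refine ⟨1000, by norm_num, ?_⟩
  intro n hn
  have hnR : (0:ℝ) < n := by
    have : (4:ℝ) ≤ n := by exact_mod_cast hn
    linarith
  apply Real.sSup_le ?_ (by positivity)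
  rintro v ⟨X, hcard, hcube, rfl⟩
  by_cases hbig : 65 ≤ n
  · obtain ⟨P, hinj, hmem, hle⟩ := main_construction hbig X hcard hcube
    calc minSimplexVol 3 3 X ≤ simplexVol P := minSimplexVol_le X P hinj hmem
      _ ≤ 11 * (n:ℝ) ^ ((-(4/3)) : ℝ) := hle
      _ ≤ 1000 * (n:ℝ) ^ ((-(4/3)) : ℝ) := by
          apply mul_le_mul_of_nonneg_right (by norm_num)
          positivity
  · push_neg at hbig
    obtain ⟨Y, hYsub, hY4⟩ := Finset.exists_subset_card_eq (show 4 ≤ X.card by rw [hcard]; exact hn)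
    let e := (Finset.equivFinOfCardEq hY4).symm
    set P : Fin 4 → EuclideanSpace ℝ (Fin 3) := fun r => (e r : EuclideanSpace ℝ (Fin 3))
      with hP_def
    have hmem : ∀ r, P r ∈ X := fun r => hYsub (e r).2
    have hinj : Function.Injective P := by
      intro r s h
      exact e.injective (Subtype.ext h)
    have h1 : simplexVol P ≤ 1 :=
      simplexVol_le_one P (fun r c => hcube (P r) (hmem r) c)
    have hcub : (n:ℝ) ^ ((4:ℝ)/3) ≤ 256 := by
      have hthird : (n:ℝ) ^ ((1:ℝ)/3) ≤ 4 := by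
        have h64 : ((64:ℝ)) ^ ((1:ℝ)/3) = 4 := by
          rw [show (64:ℝ) = 4 ^ (3:ℕ) by norm_num, ← Real.rpow_natCast (4:ℝ) 3,
            ← Real.rpow_mul (by norm_num : (0:ℝ) ≤ 4)]
          norm_num
        rw [← h64]
        apply Real.rpow_le_rpow (le_of_lt hnR) _ (by norm_num)
        have : n ≤ 64 := by omega
        exact_mod_cast this
      have hsplit : (n:ℝ) ^ ((4:ℝ)/3) = (n:ℝ) * (n:ℝ) ^ ((1:ℝ)/3) := by
        rw [show (4:ℝ)/3 = 1 + 1/3 by norm_num, Real.rpow_add hnR, Real.rpow_one]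
      rw [hsplit]
      have hn64 : (n:ℝ) ≤ 64 := by
        have : n ≤ 64 := by omega
        exact_mod_cast this
      nlinarith [Real.rpow_nonneg (le_of_lt hnR) ((1:ℝ)/3)]
    have h2 : (1:ℝ) ≤ 1000 * (n:ℝ) ^ ((-(4/3)) : ℝ) := by
      have hmul : (n:ℝ) ^ ((4:ℝ)/3) * ((n:ℝ) ^ ((-(4/3)) : ℝ)) = 1 := by
        rw [← Real.rpow_add hnR]
        norm_num
      calc (1:ℝ) = (n:ℝ) ^ ((4:ℝ)/3) * ((n:ℝ) ^ ((-(4/3)) : ℝ)) := hmul.symm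
        _ ≤ 1000 * (n:ℝ) ^ ((-(4/3)) : ℝ) := by
            apply mul_le_mul_of_nonneg_right (hcub.trans (by norm_num))
            positivity
    calc minSimplexVol 3 3 X ≤ simplexVol P := minSimplexVol_le X P hinj hmem
      _ ≤ 1 := h1
      _ ≤ 1000 * (n:ℝ) ^ ((-(4/3)) : ℝ) := h2
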